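/- Let n ≥ 1, let f ∈ ℝ[X] with natDegree f ≤ n, let s = (s_1, …, s_n) ∈ {−1,0,1}^n with s ≠ (0, …, 0), and suppose ξ ∈ ℝ is a Thom root of f with code s at level n. Let (q_k)_{k∈K} be a finite family of real polynomials and (ρ_k)_{k∈K} relations with each ρ_k ∈ {=, ≠, <, ≤, ≥, >}. For each k define the condition C_k: if ρ_k is '=', C_k says q_k is the zero polynomial; if ρ_k is '≠', C_k says q_k is not the zero polynomial; if ρ_k is '<', C_k says q_k(ξ) < 0, or q_k(ξ) = 0 and ∀ᶠ t in 𝓝[>] ξ, q_k(t) < 0; if ρ_k is '>', C_k says q_k(ξ) > 0, or q_k(ξ) = 0 and ∀ᶠ t in 𝓝[>] ξ, q_k(t) > 0; if ρ_k is '≤' (resp. '≥'), C_k is the disjunction of the condition for '<' (resp. '>') and the condition for '='. Then there exists ζ ∈ ℝ such that for every k ∈ K, if C_k holds then q_k(ζ) ρ_k 0. -/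

import Mathlib

open Polynomial Filter Set Topology

inductive SignRel | eq | ne | lt | le | ge | gt

def SignRel.holds : SignRel → ℝ → Prop
  | .eq, x => x = 0
  | .ne, x => x ≠ 0
  | .lt, x => x < 0
  | .le, x => x ≤ 0
  | .ge, x => x ≥ 0
  | .gt, x => x > 0

def IsThomRoot (n : ℕ) (f : Polynomial ℝ) (s : Fin n → ℝ) (ξ : ℝ) : Prop :=
  f.eval ξ = 0 ∧
    ∀ i : Fin n, Real.sign ((Polynomial.derivative^[(i : ℕ) + 1] f).eval ξ) = s i

/-- The condition "the virtual substitution of (f,s)+ε into (q ρ 0) holds",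
expressed semantically at the Thom root ξ. -/
def EpsCond (ξ : ℝ) (q : Polynomial ℝ) : SignRel → Prop
  | .eq => q = 0
  | .ne => q ≠ 0
  | .lt => q.eval ξ < 0 ∨ (q.eval ξ = 0 ∧ ∀ᶠ t in 𝓝[>] ξ, q.eval t < 0)
  | .gt => q.eval ξ > 0 ∨ (q.eval ξ = 0 ∧ ∀ᶠ t in 𝓝[>] ξ, q.eval t > 0)
  | .le => (q.eval ξ < 0 ∨ (q.eval ξ = 0 ∧ ∀ᶠ t in 𝓝[>] ξ, q.eval t < 0)) ∨ q = 0
  | .ge => (q.eval ξ > 0 ∨ (q.eval ξ = 0 ∧ ∀ᶠ t in 𝓝[>] ξ, q.eval t > 0)) ∨ q = 0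


lemma aux_ne {ξ : ℝ} {q : Polynomial ℝ} (hq : q ≠ 0) :
    ∀ᶠ t in 𝓝[>] ξ, q.eval t ≠ 0 := by
  have hfin : ({x : ℝ | q.IsRoot x} \ {ξ}).Finite :=
    (Polynomial.finite_setOf_isRoot hq).diff
  have h1 : ∀ᶠ t in 𝓝 ξ, t ∉ ({x : ℝ | q.IsRoot x} \ {ξ}) :=
    hfin.isClosed.isOpen_compl.eventually_mem (by simp)
  filter_upwards [h1.filter_mono nhdsWithin_le_nhds, self_mem_nhdsWithin] with t ht ht'
  exact fun h => ht ⟨h, ne_of_gt ht'⟩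

lemma aux_ev {ξ : ℝ} {q : Polynomial ℝ} (r : SignRel) (h : EpsCond ξ q r) :
    ∀ᶠ t in 𝓝[>] ξ, r.holds (q.eval t) := by
  have hc : Filter.Tendsto (fun t => q.eval t) (𝓝[>] ξ) (𝓝 (q.eval ξ)) :=
    (q.continuous.tendsto ξ).mono_left nhdsWithin_le_nhds
  cases r with
  | eq => subst h; simp [SignRel.holds]
  | ne => exact aux_ne h
  | lt =>
    rcases h with h | ⟨_, h⟩
    · exact hc.eventually_lt_const h
    · exact h
  | gt =>
    rcases h with h | ⟨_, h⟩
    · exact hc.eventually_const_lt h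
    · exact h
  | le =>
    rcases h with (h | ⟨_, h⟩) | h
    · exact (hc.eventually_lt_const h).mono fun t ht => le_of_lt ht
    · exact h.mono fun t ht => le_of_lt ht
    · subst h; simp [SignRel.holds]
  | ge =>
    rcases h with (h | ⟨_, h⟩) | h
    · exact (hc.eventually_const_lt h).mono fun t ht => le_of_lt ht
    · exact h.mono fun t ht => le_of_lt ht
    · subst h; simp [SignRel.holds]

theorem stmt12 (n : ℕ) (hn : 1 ≤ n) (f : Polynomial ℝ) (hf : f.natDegree ≤ n)
    (s : Fin n → ℝ) (hs : ∀ i, s i = -1 ∨ s i = 0 ∨ s i = 1)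
    (hs0 : s ≠ fun _ => 0)
    (ξ : ℝ) (hξ : IsThomRoot n f s ξ)
    {K : Type*} [Fintype K] (q : K → Polynomial ℝ) (ρ : K → SignRel) :
    ∃ ζ : ℝ, ∀ k : K, EpsCond ξ (q k) (ρ k) → (ρ k).holds ((q k).eval ζ) := by
  have hev : ∀ᶠ t in 𝓝[>] ξ, ∀ k : K, EpsCond ξ (q k) (ρ k) → (ρ k).holds ((q k).eval t) := by
    rw [Filter.eventually_all]
    intro k
    by_cases hk : EpsCond ξ (q k) (ρ k)
    · exact (aux_ev (ρ k) hk).mono fun t ht _ => ht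
    · exact Filter.Eventually.of_forall fun t h => absurd h hk
  exact hev.exists
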